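/- Let d ≥ 1 be an integer, let α, β ∈ ℝ satisfy α + β > d, and let λ ≥ 1. Then there exists a constant C > 0, depending only on d, α, β, λ, such that for every n ∈ ℤ^d one has ∑ ⟨n₁⟩^{−α} ⟨n − n₁⟩^{−β} ≤ C ⟨n⟩^{d − α − β}, where the sum ranges over all n₁ ∈ ℤ^d satisfying the comparability condition λ^{−1} |n − n₁| ≤ |n₁| ≤ λ |n − n₁|. (No upper restriction α, β < d is needed in this resonant case.) -/

import Mathlib

/-- Japanese bracket `⟨n⟩ = (1 + |n|²)^{1/2}` for `n ∈ ℤ^d`. -/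
noncomputable def jb (d : ℕ) (n : Fin d → ℤ) : ℝ :=
  Real.sqrt (1 + ∑ i, ((n i : ℝ)) ^ 2)

/-- Euclidean norm `|n|` for `n ∈ ℤ^d`. -/
noncomputable def znorm (d : ℕ) (n : Fin d → ℤ) : ℝ :=
  Real.sqrt (∑ i, ((n i : ℝ)) ^ 2)

lemma sq_sum_nonneg (d : ℕ) (n : Fin d → ℤ) : 0 ≤ ∑ i, ((n i : ℝ)) ^ 2 :=
  Finset.sum_nonneg fun i _ => sq_nonneg _

lemma one_le_jb (d : ℕ) (n : Fin d → ℤ) : 1 ≤ jb d n := by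
  have h := sq_sum_nonneg d n
  have : (1:ℝ) = Real.sqrt 1 := by simp
  rw [this]
  exact Real.sqrt_le_sqrt (by linarith)

lemma jb_pos (d : ℕ) (n : Fin d → ℤ) : 0 < jb d n :=
  lt_of_lt_of_le one_pos (one_le_jb d n)

lemma jb_sq (d : ℕ) (n : Fin d → ℤ) : jb d n ^ 2 = 1 + ∑ i, ((n i : ℝ)) ^ 2 :=
  Real.sq_sqrt (by have := sq_sum_nonneg d n; linarith)

lemma znorm_nonneg (d : ℕ) (n : Fin d → ℤ) : 0 ≤ znorm d n := Real.sqrt_nonneg _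

lemma znorm_sq (d : ℕ) (n : Fin d → ℤ) : znorm d n ^ 2 = ∑ i, ((n i : ℝ)) ^ 2 :=
  Real.sq_sqrt (sq_sum_nonneg d n)

lemma my_le_of_sq {a b : ℝ} (ha : 0 ≤ a) (hb : 0 ≤ b) (h : a ^ 2 ≤ b ^ 2) : a ≤ b := by
  nlinarith

lemma znorm_triangle (d : ℕ) (n m : Fin d → ℤ) :
    znorm d n ≤ znorm d m + znorm d (n - m) := by
  have hkey : ∀ k : Fin d → ℤ,
      znorm d k =
        ‖(WithLp.equiv 2 (∀ _ : Fin d, ℝ)).symm (fun i => (k i : ℝ))‖ := by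
    intro k
    rw [EuclideanSpace.norm_eq]
    unfold znorm
    congr 1
    refine Finset.sum_congr rfl fun i _ => ?_
    rw [WithLp.equiv_symm_apply, PiLp.toLp_apply, Real.norm_eq_abs, sq_abs]
  have hadd : (WithLp.equiv 2 (∀ _ : Fin d, ℝ)).symm (fun i => (n i : ℝ)) =
      (WithLp.equiv 2 (∀ _ : Fin d, ℝ)).symm (fun i => (m i : ℝ)) +
      (WithLp.equiv 2 (∀ _ : Fin d, ℝ)).symm (fun i => ((n - m) i : ℝ)) := by
    rw [WithLp.equiv_symm_apply, ← WithLp.toLp_add]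
    congr 1
    funext i
    simp [Pi.sub_apply]
  rw [hkey n, hkey m, hkey (n - m), hadd]
  exact norm_add_le _ _

open Finset in
/-- sup norm of a lattice point, as a natural number -/
def Mf (d : ℕ) (n : Fin d → ℤ) : ℕ := Finset.univ.sup fun i => (n i).natAbs

lemma natAbs_le_Mf (d : ℕ) (n : Fin d → ℤ) (i : Fin d) : (n i).natAbs ≤ Mf d n := by
  unfold Mf
  exact Finset.le_sup (f := fun i => (n i).natAbs) (Finset.mem_univ i)

lemma Mf_le_jb (d : ℕ) (hd : 1 ≤ d) (n : Fin d → ℤ) : (Mf d n : ℝ) ≤ jb d n := by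
  haveI : Nonempty (Fin d) := ⟨⟨0, hd⟩⟩
  obtain ⟨j, -, hj⟩ := Finset.exists_mem_eq_sup Finset.univ Finset.univ_nonempty
    (fun i => (n i).natAbs)
  apply my_le_of_sq (Nat.cast_nonneg _) (le_of_lt (jb_pos d n))
  rw [jb_sq]
  have h1 : ((Mf d n : ℝ)) ^ 2 = ((n j : ℝ)) ^ 2 := by
    rw [Mf, hj, Nat.cast_natAbs, Int.cast_abs, sq_abs]
  rw [h1]
  have h2 : ((n j : ℝ)) ^ 2 ≤ ∑ i, ((n i : ℝ)) ^ 2 :=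
    Finset.single_le_sum (f := fun i => ((n i : ℝ)) ^ 2)
      (fun i _ => sq_nonneg _) (Finset.mem_univ j)
  linarith

lemma jb_le_Mf (d : ℕ) (n : Fin d → ℤ) :
    jb d n ≤ Real.sqrt ((d : ℝ) + 1) * ((Mf d n : ℝ) + 1) := by
  have hM : (0:ℝ) ≤ (Mf d n : ℝ) := Nat.cast_nonneg _
  apply my_le_of_sq (le_of_lt (jb_pos d n)) (by positivity)
  rw [jb_sq, mul_pow, Real.sq_sqrt (by positivity)]
  have h1 : ∑ i, ((n i : ℝ)) ^ 2 ≤ (d : ℝ) * (Mf d n : ℝ) ^ 2 := by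
    calc ∑ i, ((n i : ℝ)) ^ 2 ≤ ∑ _i : Fin d, ((Mf d n : ℝ)) ^ 2 := by
          refine Finset.sum_le_sum fun i _ => ?_
          have := natAbs_le_Mf d n i
          have h3 : ((n i : ℝ)) ^ 2 = (((n i).natAbs : ℝ)) ^ 2 := by
            rw [Nat.cast_natAbs, Int.cast_abs, sq_abs]
          rw [h3]
          have h4 : (((n i).natAbs : ℝ)) ≤ (Mf d n : ℝ) := Nat.cast_le.2 this
          nlinarith [Nat.cast_nonneg (α := ℝ) (n i).natAbs]
      _ = (d : ℝ) * (Mf d n : ℝ) ^ 2 := by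
          rw [Finset.sum_const, Finset.card_univ, Fintype.card_fin, nsmul_eq_mul]
  nlinarith

/-- the `ℓ∞` ball of radius `m` in `ℤ^d` -/
noncomputable def ballZ (d m : ℕ) : Finset (Fin d → ℤ) :=
  Fintype.piFinset fun _ => Finset.Icc (-(m : ℤ)) m

lemma mem_ballZ {d m : ℕ} {n : Fin d → ℤ} : n ∈ ballZ d m ↔ Mf d n ≤ m := by
  rw [ballZ, Fintype.mem_piFinset, Mf, Finset.sup_le_iff]
  constructor
  · intro h i _
    have := h i
    rw [Finset.mem_Icc] at this
    omega
  · intro h i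
    have := h i (Finset.mem_univ i)
    rw [Finset.mem_Icc]
    omega

lemma card_ballZ (d m : ℕ) : (ballZ d m).card = (2 * m + 1) ^ d := by
  rw [ballZ, Fintype.card_piFinset]
  have : (Finset.Icc (-(m : ℤ)) (m : ℤ)).card = 2 * m + 1 := by
    rw [Int.card_Icc]
    omega
  simp [this]

lemma shell_card (d : ℕ) (m : ℕ) (hm : 1 ≤ m) (F : Finset (Fin d → ℤ))
    (hF : ∀ n ∈ F, Mf d n = m) :
    (F.card : ℝ) ≤ 2 * d * 3 ^ (d - 1) * (m : ℝ) ^ (d - 1) := by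
  have hsub : F ⊆ ballZ d m \ ballZ d (m - 1) := by
    intro n hn
    rw [Finset.mem_sdiff, mem_ballZ, mem_ballZ, hF n hn]
    omega
  have hball : ballZ d (m - 1) ⊆ ballZ d m := by
    intro n hn
    rw [mem_ballZ] at *
    omega
  have hcard : F.card ≤ (2 * m + 1) ^ d - (2 * (m - 1) + 1) ^ d := by
    calc F.card ≤ (ballZ d m \ ballZ d (m - 1)).card := Finset.card_le_card hsub
      _ = (ballZ d m).card - (ballZ d (m - 1)).card := Finset.card_sdiff_of_subset hball
      _ = (2 * m + 1) ^ d - (2 * (m - 1) + 1) ^ d := by rw [card_ballZ, card_ballZ]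
  have hm' : 2 * (m - 1) + 1 = 2 * m - 1 := by omega
  rw [hm'] at hcard
  -- now cast to ℝ
  have hle : (2 * m - 1) ^ d ≤ (2 * m + 1) ^ d := Nat.pow_le_pow_left (by omega) d
  have hcast : ((((2 * m + 1) ^ d - (2 * m - 1) ^ d : ℕ)) : ℝ)
      = ((2 * m + 1 : ℝ)) ^ d - ((2 * m - 1 : ℝ)) ^ d := by
    rw [Nat.cast_sub hle]
    push_cast [Nat.cast_sub (by omega : 1 ≤ 2 * m)]
    ring_nf
  have hstep : (F.card : ℝ) ≤ ((2 * m + 1 : ℝ)) ^ d - ((2 * m - 1 : ℝ)) ^ d := by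
    rw [← hcast]
    exact_mod_cast Nat.cast_le.2 hcard
  refine hstep.trans ?_
  -- geometric sum bound
  set x : ℝ := 2 * m + 1 with hx
  set y : ℝ := 2 * m - 1 with hy
  have hm1 : (1 : ℝ) ≤ (m : ℝ) := by exact_mod_cast hm
  have hy0 : 0 ≤ y := by rw [hy]; linarith
  have hxy : y ≤ x := by rw [hx, hy]; linarith
  have hgeom : x ^ d - y ^ d = (∑ i ∈ Finset.range d, x ^ i * y ^ (d - 1 - i)) * (x - y) :=
    (geom_sum₂_mul x y d).symm
  have hterm : ∀ i ∈ Finset.range d, x ^ i * y ^ (d - 1 - i) ≤ x ^ (d - 1) := by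
    intro i hi
    rw [Finset.mem_range] at hi
    calc x ^ i * y ^ (d - 1 - i) ≤ x ^ i * x ^ (d - 1 - i) := by
          have := pow_le_pow_left₀ hy0 hxy (d - 1 - i)
          have hxi : (0:ℝ) ≤ x ^ i := by positivity
          nlinarith
      _ = x ^ (d - 1) := by
          rw [← pow_add]
          congr 1
          omega
  have hsum : ∑ i ∈ Finset.range d, x ^ i * y ^ (d - 1 - i) ≤ (d : ℝ) * x ^ (d - 1) := by
    calc ∑ i ∈ Finset.range d, x ^ i * y ^ (d - 1 - i)
        ≤ ∑ _i ∈ Finset.range d, x ^ (d - 1) := Finset.sum_le_sum hterm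
      _ = (d : ℝ) * x ^ (d - 1) := by rw [Finset.sum_const, Finset.card_range, nsmul_eq_mul]
  have hxm : x ≤ 3 * (m : ℝ) := by rw [hx]; linarith
  have hxpow : x ^ (d - 1) ≤ (3 : ℝ) ^ (d - 1) * (m : ℝ) ^ (d - 1) := by
    rw [← mul_pow]
    exact pow_le_pow_left₀ (by rw [hx]; linarith) hxm (d - 1)
  have hsumnn : 0 ≤ ∑ i ∈ Finset.range d, x ^ i * y ^ (d - 1 - i) :=
    Finset.sum_nonneg fun i _ => by positivity
  calc x ^ d - y ^ d = (∑ i ∈ Finset.range d, x ^ i * y ^ (d - 1 - i)) * (x - y) := hgeom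
    _ = 2 * ∑ i ∈ Finset.range d, x ^ i * y ^ (d - 1 - i) := by rw [hx, hy]; ring
    _ ≤ 2 * ((d : ℝ) * x ^ (d - 1)) := by linarith
    _ ≤ 2 * d * ((3 : ℝ) ^ (d - 1) * (m : ℝ) ^ (d - 1)) := by
        have hd0 : (0:ℝ) ≤ (d:ℝ) := Nat.cast_nonneg d
        nlinarith [pow_nonneg (show (0:ℝ) ≤ x by rw [hx]; linarith) (d-1)]
    _ = 2 * d * 3 ^ (d - 1) * (m : ℝ) ^ (d - 1) := by ring

lemma rpow_telescope {u : ℝ} (hu : 1 < u) {x : ℝ} (hx : 1 ≤ x) :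
    (u - 1) * (x + 1) ^ (-u) ≤ x ^ (1 - u) - (x + 1) ^ (1 - u) := by
  obtain ⟨c, hc, hceq⟩ := exists_hasDerivAt_eq_slope (fun y => y ^ (1 - u))
    (fun y => (1 - u) * y ^ (-u)) (by linarith : x < x + 1)
    (by
      apply continuousOn_of_forall_continuousAt
      intro y hy
      rw [Set.mem_Icc] at hy
      exact Real.continuousAt_rpow_const y (1 - u) (Or.inl (by linarith)))
    (by
      intro y hy
      rw [Set.mem_Ioo] at hy
      have h := Real.hasDerivAt_rpow_const (x := y) (p := 1 - u) (Or.inl (by linarith))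
      show HasDerivAt (fun y => y ^ (1 - u)) ((1 - u) * y ^ (-u)) y
      rw [show (1 - u) * y ^ (-u) = (1 - u) * y ^ (1 - u - 1) by rw [show 1 - u - 1 = -u by ring]]
      exact h)
  rw [Set.mem_Ioo] at hc
  have hc0 : 0 < c := by linarith
  have heq : (x + 1) ^ (1 - u) - x ^ (1 - u) = (1 - u) * c ^ (-u) := by
    rw [hceq]; ring
  have hmono : c ^ (-u) ≥ (x + 1) ^ (-u) :=
    Real.rpow_le_rpow_of_nonpos hc0 (by linarith) (by linarith)
  nlinarith [Real.rpow_nonneg (by linarith : (0:ℝ) ≤ x + 1) (-u)]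

lemma tail_block {u : ℝ} (hu : 1 < u) (K : ℕ) (hK : 1 ≤ K) :
    ∀ N : ℕ, K ≤ N → ∑ m ∈ Finset.Ioc K N, (m : ℝ) ^ (-u)
      ≤ (u - 1)⁻¹ * ((K : ℝ) ^ (1 - u) - (N : ℝ) ^ (1 - u)) := by
  refine Nat.le_induction ?_ ?_
  · simp
  · intro N hN ih
    rw [Finset.sum_Ioc_succ_top hN]
    have hx : (1 : ℝ) ≤ (N : ℝ) := by exact_mod_cast hK.trans hN
    have h := rpow_telescope hu hx
    have hcast : ((N + 1 : ℕ) : ℝ) = (N : ℝ) + 1 := by push_cast; ring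
    have hu1 : (0 : ℝ) < u - 1 := by linarith
    rw [hcast]
    have h2 : ((N : ℝ) + 1) ^ (-u) ≤ (u - 1)⁻¹ * ((N : ℝ) ^ (1 - u) - ((N : ℝ) + 1) ^ (1 - u)) := by
      rw [le_inv_mul_iff₀ hu1]
      linarith
    linarith

lemma tail_nat {u : ℝ} (hu : 1 < u) (K : ℕ) (hK : 1 ≤ K) (F : Finset ℕ)
    (hF : ∀ m ∈ F, K ≤ m) :
    ∑ m ∈ F, (m : ℝ) ^ (-u) ≤ (1 + (u - 1)⁻¹) * (K : ℝ) ^ (1 - u) := by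
  classical
  set N := K + F.sup id with hN
  have hKN : K ≤ N := Nat.le_add_right _ _
  have hsub : F ⊆ Finset.Icc K N := by
    intro m hm
    rw [Finset.mem_Icc]
    exact ⟨hF m hm, le_trans (Finset.le_sup (f := id) hm) (Nat.le_add_left _ _)⟩
  have hK1 : (1 : ℝ) ≤ (K : ℝ) := by exact_mod_cast hK
  have step1 : ∑ m ∈ F, (m : ℝ) ^ (-u) ≤ ∑ m ∈ Finset.Icc K N, (m : ℝ) ^ (-u) :=
    Finset.sum_le_sum_of_subset_of_nonneg hsub
      (fun m _ _ => Real.rpow_nonneg (Nat.cast_nonneg m) _)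
  have step2 : ∑ m ∈ Finset.Icc K N, (m : ℝ) ^ (-u)
      = (K : ℝ) ^ (-u) + ∑ m ∈ Finset.Ioc K N, (m : ℝ) ^ (-u) := by
    rw [Finset.Icc_eq_cons_Ioc hKN, Finset.sum_cons]
  have step3 := tail_block hu K hK N hKN
  have step4 : (K : ℝ) ^ (-u) ≤ (K : ℝ) ^ (1 - u) :=
    Real.rpow_le_rpow_of_exponent_le hK1 (by linarith)
  have hNn : (0 : ℝ) ≤ (N : ℝ) ^ (1 - u) := Real.rpow_nonneg (Nat.cast_nonneg N) _
  have hu1 : (0 : ℝ) < (u - 1)⁻¹ := inv_pos.2 (by linarith)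
  calc ∑ m ∈ F, (m : ℝ) ^ (-u) ≤ (K : ℝ) ^ (-u) + ∑ m ∈ Finset.Ioc K N, (m : ℝ) ^ (-u) := by
        rw [← step2]; exact step1
    _ ≤ (K : ℝ) ^ (1 - u) + (u - 1)⁻¹ * ((K : ℝ) ^ (1 - u) - (N : ℝ) ^ (1 - u)) := by linarith
    _ ≤ (1 + (u - 1)⁻¹) * (K : ℝ) ^ (1 - u) := by nlinarith

lemma lattice_tail (d : ℕ) (hd : 1 ≤ d) {t : ℝ} (ht : (d : ℝ) < t) :
    ∃ C > 0, ∀ K : ℕ, 1 ≤ K → ∀ F : Finset (Fin d → ℤ),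
      (∀ n ∈ F, K ≤ Mf d n) →
      ∑ n ∈ F, jb d n ^ (-t) ≤ C * (K : ℝ) ^ ((d : ℝ) - t) := by
  classical
  set u : ℝ := t - (d : ℝ) + 1 with hu_def
  have hu : 1 < u := by rw [hu_def]; linarith
  set B : ℝ := 2 * d * 3 ^ (d - 1) with hB
  have hBpos : 0 < B := by
    rw [hB]
    have : (0:ℝ) < (d:ℝ) := by exact_mod_cast hd
    positivity
  have hu1 : (0 : ℝ) < (u - 1)⁻¹ := inv_pos.2 (by linarith)
  refine ⟨B * (1 + (u - 1)⁻¹), mul_pos hBpos (by linarith), ?_⟩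
  intro K hK F hF
  have hK1 : (1 : ℝ) ≤ (K : ℝ) := by exact_mod_cast hK
  -- step 1: termwise bound by Mf
  have step1 : ∑ n ∈ F, jb d n ^ (-t) ≤ ∑ n ∈ F, ((Mf d n : ℝ)) ^ (-t) := by
    refine Finset.sum_le_sum fun n hn => ?_
    have hMpos : (0 : ℝ) < (Mf d n : ℝ) := by
      have := hF n hn; exact_mod_cast lt_of_lt_of_le (Nat.lt_of_lt_of_le Nat.zero_lt_one hK) (by omega)
    exact Real.rpow_le_rpow_of_nonpos hMpos (Mf_le_jb d hd n) (by linarith)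
  -- step 2: group by Mf
  have step2 : ∑ n ∈ F, ((Mf d n : ℝ)) ^ (-t)
      = ∑ m ∈ F.image (Mf d), (F.filter fun n => Mf d n = m).card • ((m : ℝ)) ^ (-t) := by
    rw [Finset.sum_comp (fun m : ℕ => ((m : ℝ)) ^ (-t)) (Mf d)]
  have himg : ∀ m ∈ F.image (Mf d), K ≤ m := by
    intro m hm
    obtain ⟨n, hn, rfl⟩ := Finset.mem_image.1 hm
    exact hF n hn
  -- step 3: card bound
  have step3 : ∀ m ∈ F.image (Mf d),
      ((F.filter fun n => Mf d n = m).card : ℝ) * ((m : ℝ)) ^ (-t)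
        ≤ B * ((m : ℝ) ^ (d - 1) * (m : ℝ) ^ (-t)) := by
    intro m hm
    have hm1 : 1 ≤ m := le_trans hK (himg m hm)
    have hcard := shell_card d m hm1 (F.filter fun n => Mf d n = m)
      (fun n hn => (Finset.mem_filter.1 hn).2)
    have hrn : (0:ℝ) ≤ ((m : ℝ)) ^ (-t) := Real.rpow_nonneg (Nat.cast_nonneg m) _
    calc ((F.filter fun n => Mf d n = m).card : ℝ) * ((m : ℝ)) ^ (-t)
        ≤ (B * (m : ℝ) ^ (d - 1)) * ((m : ℝ)) ^ (-t) := by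
          apply mul_le_mul_of_nonneg_right _ hrn
          rw [hB]; exact hcard
      _ = B * ((m : ℝ) ^ (d - 1) * (m : ℝ) ^ (-t)) := by ring
  -- step 4: power combination
  have step4 : ∀ m ∈ F.image (Mf d),
      (m : ℝ) ^ (d - 1) * (m : ℝ) ^ (-t) = ((m : ℝ)) ^ (-u) := by
    intro m hm
    have hm1 : 1 ≤ m := le_trans hK (himg m hm)
    have hmpos : (0:ℝ) < (m : ℝ) := by exact_mod_cast hm1
    rw [← Real.rpow_natCast (m : ℝ) (d - 1), ← Real.rpow_add hmpos]
    congr 1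
    have : ((d - 1 : ℕ) : ℝ) = (d : ℝ) - 1 := by
      have : 1 ≤ d := hd
      push_cast [Nat.cast_sub this]
      ring
    rw [this, hu_def]
    ring
  have step5 := tail_nat hu K hK (F.image (Mf d)) himg
  calc ∑ n ∈ F, jb d n ^ (-t)
      ≤ ∑ m ∈ F.image (Mf d), (F.filter fun n => Mf d n = m).card • ((m : ℝ)) ^ (-t) := by
        rw [← step2]; exact step1
    _ ≤ ∑ m ∈ F.image (Mf d), B * ((m : ℝ)) ^ (-u) := by
        refine Finset.sum_le_sum fun m hm => ?_
        rw [nsmul_eq_mul]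
        have := step3 m hm
        rw [step4 m hm] at this
        exact this
    _ = B * ∑ m ∈ F.image (Mf d), ((m : ℝ)) ^ (-u) := by rw [Finset.mul_sum]
    _ ≤ B * ((1 + (u - 1)⁻¹) * (K : ℝ) ^ (1 - u)) := by
        exact mul_le_mul_of_nonneg_left step5 (le_of_lt hBpos)
    _ = B * (1 + (u - 1)⁻¹) * (K : ℝ) ^ ((d : ℝ) - t) := by
        rw [show (1 : ℝ) - u = (d : ℝ) - t by rw [hu_def]; ring]
        ring

lemma jb_sq' (d : ℕ) (n : Fin d → ℤ) : jb d n ^ 2 = 1 + znorm d n ^ 2 := by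
  rw [jb_sq, znorm_sq]

lemma resonance_jb (d : ℕ) (lam : ℝ) (hlam : 1 ≤ lam) (n m : Fin d → ℤ)
    (h1 : lam⁻¹ * znorm d (n - m) ≤ znorm d m)
    (h2 : znorm d m ≤ lam * znorm d (n - m)) :
    jb d n ≤ (1 + lam) * jb d m ∧
      jb d m ≤ lam * jb d (n - m) ∧ jb d (n - m) ≤ lam * jb d m := by
  have hzm := znorm_nonneg d m
  have hzw := znorm_nonneg d (n - m)
  have hzn := znorm_nonneg d n
  have hlam0 : (0:ℝ) < lam := by linarith
  have hw : znorm d (n - m) ≤ lam * znorm d m := by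
    have h := mul_le_mul_of_nonneg_left h1 (le_of_lt hlam0)
    rwa [← mul_assoc, mul_inv_cancel₀ (ne_of_gt hlam0), one_mul] at h
  have htri := znorm_triangle d n m
  have hjm := jb_pos d m
  have hjw := jb_pos d (n - m)
  have hjn := jb_pos d n
  refine ⟨?_, ?_, ?_⟩
  · apply my_le_of_sq (le_of_lt hjn) (by positivity)
    rw [mul_pow, jb_sq', jb_sq']
    have h5 : znorm d n ≤ (1 + lam) * znorm d m := by linarith
    nlinarith [mul_le_mul h5 h5 hzn (by positivity : (0:ℝ) ≤ (1 + lam) * znorm d m)]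
  · apply my_le_of_sq (le_of_lt hjm) (by positivity)
    rw [mul_pow, jb_sq', jb_sq']
    nlinarith [mul_le_mul h2 h2 hzm (by positivity : (0:ℝ) ≤ lam * znorm d (n - m))]
  · apply my_le_of_sq (le_of_lt hjw) (by positivity)
    rw [mul_pow, jb_sq', jb_sq']
    nlinarith [mul_le_mul hw hw hzw (by positivity : (0:ℝ) ≤ lam * znorm d m)]

lemma rpow_comp {a b lam : ℝ} (ha : 1 ≤ a) (hb : 1 ≤ b) (hlam : 1 ≤ lam)
    (h1 : a ≤ lam * b) (h2 : b ≤ lam * a) (β : ℝ) :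
    b ^ (-β) ≤ lam ^ |β| * a ^ (-β) := by
  have ha0 : (0:ℝ) < a := by linarith
  have hb0 : (0:ℝ) < b := by linarith
  have hlam0 : (0:ℝ) < lam := by linarith
  rcases le_total 0 β with hβ | hβ
  · rw [abs_of_nonneg hβ]
    have hab : a / lam ≤ b := by
      rw [div_le_iff₀ hlam0]
      calc a ≤ lam * b := h1
        _ = b * lam := by ring
    have h3 : b ^ (-β) ≤ (a / lam) ^ (-β) :=
      Real.rpow_le_rpow_of_nonpos (by positivity) hab (by linarith)
    refine h3.trans (le_of_eq ?_)
    rw [Real.div_rpow (le_of_lt ha0) (le_of_lt hlam0),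
      Real.rpow_neg (le_of_lt hlam0) β]
    field_simp
  · rw [abs_of_nonpos hβ]
    have h3 : b ^ (-β) ≤ (lam * a) ^ (-β) :=
      Real.rpow_le_rpow (le_of_lt hb0) h2 (by linarith)
    refine h3.trans (le_of_eq ?_)
    rw [Real.mul_rpow (le_of_lt hlam0) (le_of_lt ha0)]

set_option maxHeartbeats 1000000 in
/-- Lemma 2.3(ii): discrete convolution estimate, resonant case. -/
theorem stmt1 (d : ℕ) (hd : 1 ≤ d) (α β : ℝ) (hαβ : (d : ℝ) < α + β)
    (lam : ℝ) (hlam : 1 ≤ lam) :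
    ∃ C > 0, ∀ n : Fin d → ℤ,
      Summable (fun n₁ : {m : Fin d → ℤ //
          lam⁻¹ * znorm d (n - m) ≤ znorm d m ∧ znorm d m ≤ lam * znorm d (n - m)} =>
        jb d (n₁ : Fin d → ℤ) ^ (-α) * jb d (n - (n₁ : Fin d → ℤ)) ^ (-β)) ∧
      ∑' n₁ : {m : Fin d → ℤ //
          lam⁻¹ * znorm d (n - m) ≤ znorm d m ∧ znorm d m ≤ lam * znorm d (n - m)},
        jb d (n₁ : Fin d → ℤ) ^ (-α) * jb d (n - (n₁ : Fin d → ℤ)) ^ (-β)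
        ≤ C * jb d n ^ ((d : ℝ) - α - β) := by
  classical
  set s : ℝ := α + β with hs_def
  have hs : (d : ℝ) < s := hαβ
  obtain ⟨Ct, hCt, htail⟩ := lattice_tail d hd hs
  have hd1 : (1 : ℝ) ≤ Real.sqrt ((d : ℝ) + 1) := by
    have h1 : (1 : ℝ) ≤ (d : ℝ) := by exact_mod_cast hd
    nlinarith [Real.sq_sqrt (show (0:ℝ) ≤ (d : ℝ) + 1 by linarith),
      Real.sqrt_nonneg ((d : ℝ) + 1), sq_nonneg (Real.sqrt ((d : ℝ) + 1) - 1)]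
  set A : ℝ := (1 + lam) * Real.sqrt ((d : ℝ) + 1) with hA_def
  have hA1 : (1 : ℝ) ≤ A := by nlinarith
  have hA0 : (0 : ℝ) < A := by linarith
  set Lb : ℝ := lam ^ |β| with hLb_def
  have hLb0 : (0 : ℝ) < Lb := Real.rpow_pos_of_pos (by linarith) _
  set C1 : ℝ := Lb * (1 + Ct) * (4 * A) ^ (s - (d : ℝ)) with hC1
  set C2 : ℝ := Lb * Ct * (2 * A) ^ (s - (d : ℝ)) with hC2
  have hC1pos : 0 < C1 :=
    mul_pos (mul_pos hLb0 (by linarith)) (Real.rpow_pos_of_pos (by linarith) _)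
  have hC2pos : 0 < C2 :=
    mul_pos (mul_pos hLb0 hCt) (Real.rpow_pos_of_pos (by linarith) _)
  refine ⟨C1 + C2, by linarith, ?_⟩
  intro n
  have hexp : (d : ℝ) - α - β = (d : ℝ) - s := by rw [hs_def]; ring
  have hjn := jb_pos d n
  have key : ∀ F : Finset {m : Fin d → ℤ //
      lam⁻¹ * znorm d (n - m) ≤ znorm d m ∧ znorm d m ≤ lam * znorm d (n - m)},
      ∑ x ∈ F, jb d (x : Fin d → ℤ) ^ (-α) * jb d (n - (x : Fin d → ℤ)) ^ (-β)
        ≤ (C1 + C2) * jb d n ^ ((d : ℝ) - α - β) := by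
    intro F
    rw [hexp]
    set G : Finset (Fin d → ℤ) := F.image Subtype.val with hG
    have hGres : ∀ m ∈ G, lam⁻¹ * znorm d (n - m) ≤ znorm d m ∧
        znorm d m ≤ lam * znorm d (n - m) := by
      intro m hm
      obtain ⟨x, hx, rfl⟩ := Finset.mem_image.1 hm
      exact x.2
    have hsum_eq : ∑ x ∈ F, jb d (x : Fin d → ℤ) ^ (-α) * jb d (n - (x : Fin d → ℤ)) ^ (-β)
        = ∑ m ∈ G, jb d m ^ (-α) * jb d (n - m) ^ (-β) := by
      rw [hG]
      exact (Finset.sum_image (f := fun m : Fin d → ℤ => jb d m ^ (-α) * jb d (n - m) ^ (-β))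
        (g := Subtype.val) fun x _ y _ h => Subtype.ext h).symm
    rw [hsum_eq]
    -- termwise bound
    have hterm : ∀ m ∈ G, jb d m ^ (-α) * jb d (n - m) ^ (-β) ≤ Lb * jb d m ^ (-s) := by
      intro m hm
      obtain ⟨hr1, hr2⟩ := hGres m hm
      obtain ⟨-, hm2, hm3⟩ := resonance_jb d lam hlam n m hr1 hr2
      have hcomp := rpow_comp (one_le_jb d m) (one_le_jb d (n - m)) hlam hm2 hm3 β
      calc jb d m ^ (-α) * jb d (n - m) ^ (-β)
          ≤ jb d m ^ (-α) * (Lb * jb d m ^ (-β)) :=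
            mul_le_mul_of_nonneg_left hcomp (Real.rpow_nonneg (jb_pos d m).le _)
        _ = Lb * jb d m ^ (-s) := by
            rw [show jb d m ^ (-α) * (Lb * jb d m ^ (-β))
                = Lb * (jb d m ^ (-α) * jb d m ^ (-β)) by ring,
              ← Real.rpow_add (jb_pos d m), show -α + -β = -s by rw [hs_def]; ring]
    have hjbn : ∀ m ∈ G, jb d n ≤ (1 + lam) * jb d m := fun m hm =>
      (resonance_jb d lam hlam n m (hGres m hm).1 (hGres m hm).2).1
    have hS : ∑ m ∈ G, jb d m ^ (-α) * jb d (n - m) ^ (-β)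
        ≤ Lb * ∑ m ∈ G, jb d m ^ (-s) := by
      rw [Finset.mul_sum]
      exact Finset.sum_le_sum hterm
    rcases le_or_gt (jb d n) (4 * A) with hcase | hcase
    · -- small case
      have hsplit : ∑ m ∈ G, jb d m ^ (-s) ≤ 1 + Ct := by
        rw [← Finset.sum_filter_add_sum_filter_not G (fun m => Mf d m = 0)
          (fun m => jb d m ^ (-s))]
        have h0 : ∑ m ∈ G.filter (fun m => Mf d m = 0), jb d m ^ (-s) ≤ 1 := by
          have hsub0 : G.filter (fun m => Mf d m = 0) ⊆ {(0 : Fin d → ℤ)} := by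
            intro m hm
            rw [Finset.mem_filter] at hm
            rw [Finset.mem_singleton]
            funext i
            have h := natAbs_le_Mf d m i
            rw [hm.2, Nat.le_zero, Int.natAbs_eq_zero] at h
            exact h
          calc ∑ m ∈ G.filter (fun m => Mf d m = 0), jb d m ^ (-s)
              ≤ ∑ m ∈ ({(0 : Fin d → ℤ)} : Finset (Fin d → ℤ)), jb d m ^ (-s) :=
                Finset.sum_le_sum_of_subset_of_nonneg hsub0
                  (fun m _ _ => Real.rpow_nonneg (jb_pos d m).le _)
            _ = jb d 0 ^ (-s) := Finset.sum_singleton _ _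
            _ ≤ 1 := Real.rpow_le_one_of_one_le_of_nonpos (one_le_jb d 0) (by linarith)
        have h1 : ∑ m ∈ G.filter (fun m => ¬ Mf d m = 0), jb d m ^ (-s) ≤ Ct := by
          have h := htail 1 le_rfl (G.filter fun m => ¬ Mf d m = 0) (fun m hm => by
            rw [Finset.mem_filter] at hm
            omega)
          simpa using h
        linarith
      have hx4 : (4 * A) ^ ((d : ℝ) - s) ≤ jb d n ^ ((d : ℝ) - s) :=
        Real.rpow_le_rpow_of_nonpos hjn hcase (by linarith)
      have hC1eq : C1 * (4 * A) ^ ((d : ℝ) - s) = Lb * (1 + Ct) := by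
        rw [hC1, mul_assoc, ← Real.rpow_add (by linarith : (0:ℝ) < 4 * A),
          show s - (d : ℝ) + ((d : ℝ) - s) = 0 by ring, Real.rpow_zero, mul_one]
      calc ∑ m ∈ G, jb d m ^ (-α) * jb d (n - m) ^ (-β)
          ≤ Lb * (1 + Ct) := hS.trans (by nlinarith)
        _ = C1 * (4 * A) ^ ((d : ℝ) - s) := hC1eq.symm
        _ ≤ C1 * jb d n ^ ((d : ℝ) - s) :=
            mul_le_mul_of_nonneg_left hx4 hC1pos.le
        _ ≤ (C1 + C2) * jb d n ^ ((d : ℝ) - s) := by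
            have := Real.rpow_nonneg hjn.le ((d : ℝ) - s)
            nlinarith
    · -- large case
      set ρ : ℝ := jb d n / A with hρ_def
      have hρ4 : 4 < ρ := by
        rw [hρ_def, lt_div_iff₀ hA0]
        linarith
      set K : ℕ := ⌊ρ⌋₊ - 1 with hK_def
      have hfl4 : 4 ≤ ⌊ρ⌋₊ := Nat.le_floor (by exact_mod_cast hρ4.le)
      have hK1 : 1 ≤ K := by omega
      have hKcast : (K : ℝ) = (⌊ρ⌋₊ : ℝ) - 1 := by
        rw [hK_def, Nat.cast_sub (by omega)]
        simp
      have hρK : ρ / 2 ≤ (K : ℝ) := by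
        have h := Nat.lt_floor_add_one ρ
        rw [hKcast]
        linarith
      have hKM : ∀ m ∈ G, K ≤ Mf d m := by
        intro m hm
        have hj1 := hjbn m hm
        have hj2 := jb_le_Mf d m
        have hρM : ρ ≤ ((Mf d m : ℝ)) + 1 := by
          rw [hρ_def, div_le_iff₀ hA0, hA_def]
          calc jb d n ≤ (1 + lam) * jb d m := hj1
            _ ≤ (1 + lam) * (Real.sqrt ((d : ℝ) + 1) * ((Mf d m : ℝ) + 1)) :=
                mul_le_mul_of_nonneg_left hj2 (by linarith)
            _ = ((Mf d m : ℝ) + 1) * ((1 + lam) * Real.sqrt ((d : ℝ) + 1)) := by ring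
        have hfloor : ⌊ρ⌋₊ ≤ Mf d m + 1 := by
          have h2 : ρ ≤ ((Mf d m + 1 : ℕ) : ℝ) := by push_cast; linarith
          calc ⌊ρ⌋₊ ≤ ⌊((Mf d m + 1 : ℕ) : ℝ)⌋₊ := Nat.floor_mono h2
            _ = Mf d m + 1 := Nat.floor_natCast _
        omega
      have hSK := htail K hK1 G hKM
      have hρ0 : (0 : ℝ) < ρ / 2 := by linarith
      have hKpow : (K : ℝ) ^ ((d : ℝ) - s) ≤ (ρ / 2) ^ ((d : ℝ) - s) :=
        Real.rpow_le_rpow_of_nonpos hρ0 hρK (by linarith)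
      have hρpow : (ρ / 2) ^ ((d : ℝ) - s)
          = (2 * A) ^ (s - (d : ℝ)) * jb d n ^ ((d : ℝ) - s) := by
        rw [show ρ / 2 = jb d n / (2 * A) by rw [hρ_def, div_div, mul_comm]]
        rw [Real.div_rpow hjn.le (by linarith : (0:ℝ) ≤ 2 * A)]
        rw [div_eq_mul_inv, ← Real.rpow_neg (by linarith : (0:ℝ) ≤ 2 * A),
          show -((d : ℝ) - s) = s - (d : ℝ) by ring]
        ring
      calc ∑ m ∈ G, jb d m ^ (-α) * jb d (n - m) ^ (-β)
          ≤ Lb * ∑ m ∈ G, jb d m ^ (-s) := hS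
        _ ≤ Lb * (Ct * (K : ℝ) ^ ((d : ℝ) - s)) :=
            mul_le_mul_of_nonneg_left hSK hLb0.le
        _ ≤ Lb * (Ct * ((ρ / 2) ^ ((d : ℝ) - s))) := by
            apply mul_le_mul_of_nonneg_left _ hLb0.le
            exact mul_le_mul_of_nonneg_left hKpow hCt.le
        _ = C2 * jb d n ^ ((d : ℝ) - s) := by
            rw [hρpow, hC2]
            ring
        _ ≤ (C1 + C2) * jb d n ^ ((d : ℝ) - s) := by
            have := Real.rpow_nonneg hjn.le ((d : ℝ) - s)
            nlinarith
  have hnonneg : ∀ x : {m : Fin d → ℤ //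
      lam⁻¹ * znorm d (n - m) ≤ znorm d m ∧ znorm d m ≤ lam * znorm d (n - m)},
      0 ≤ jb d (x : Fin d → ℤ) ^ (-α) * jb d (n - (x : Fin d → ℤ)) ^ (-β) := by
    intro x
    exact mul_nonneg (Real.rpow_nonneg (jb_pos d _).le _)
      (Real.rpow_nonneg (jb_pos d _).le _)
  have hsummable := summable_of_sum_le hnonneg key
  exact ⟨hsummable, Summable.tsum_le_of_sum_le hsummable key⟩
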